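/- With βₙ = n² + 2√n + 1/n for n a positive even perfect square, and with d₁ = d₁(n) determined by the transmission relation 2d₁(√βₙ·h(√βₙπ) - 2βₙ·tan(βₙπ)·sin(√βₙπ)·sinh(√βₙπ) + i(1 - cosh(√βₙπ)cos(√βₙπ) + √βₙ·tan(βₙπ)·h(√βₙπ))) = (2√βₙ·sin(√βₙπ)·sinh(√βₙπ) - i·h(√βₙπ))·(-tan(βₙπ)/(2βₙ²) + π/(2βₙ)), where h(x) = cosh(x)sin(x) + sinh(x)cos(x), one has the asymptotic equivalence 2·βₙ^{3/2}·d₁ ~ π²·√n as n → ∞. -/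

import Mathlib

open Real Filter Complex

noncomputable section AuxD1

/-- k = 2m. -/
def kkD1 (m : ℕ) : ℝ := ((2 * m : ℕ) : ℝ)
def ttD1 (m : ℕ) : ℝ := π / kkD1 m
def uuD1 (m : ℕ) : ℝ := π / (kkD1 m)^2
def ssD1 (m : ℕ) : ℝ := (kkD1 m)^2 * π + ttD1 m
def rrD1 (m : ℕ) : ℝ := (kkD1 m)^2 + 1 / kkD1 m
def bbD1 (m : ℕ) : ℝ := (kkD1 m)^4 + 2 * kkD1 m + 1 / (kkD1 m)^2
def coD1 (m : ℕ) : ℝ := Real.cosh (ssD1 m) / Real.sinh (ssD1 m)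

def XXD1 (m : ℕ) : ℝ :=
  (1 + 1/(kkD1 m)^3) * (coD1 m * Real.sin (ttD1 m) + Real.cos (ttD1 m))
    - 2 * (bbD1 m / (kkD1 m)^4) * ((kkD1 m)^2 * Real.tan (uuD1 m)) * Real.sin (ttD1 m)

def YYD1 (m : ℕ) : ℝ :=
  (1/(kkD1 m)^2) * (1/Real.sinh (ssD1 m)) - coD1 m * Real.cos (ttD1 m) * (1/(kkD1 m)^2)
    + (1 + 1/(kkD1 m)^3) * Real.tan (uuD1 m) * (coD1 m * Real.sin (ttD1 m) + Real.cos (ttD1 m))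

def AAD1 (m : ℕ) : ℝ := 2 * (1 + 1/(kkD1 m)^3) * (kkD1 m * Real.sin (ttD1 m))

def BBD1 (m : ℕ) : ℝ := (coD1 m * Real.sin (ttD1 m) + Real.cos (ttD1 m)) * (1/kkD1 m)

def WWD1 (m : ℕ) : ℝ :=
  (1 + 1/(kkD1 m)^3) / (2*π) - Real.tan (uuD1 m) * ((1/(kkD1 m)^2) * (1/rrD1 m)) / (2*π^2)

def DenD1 (m : ℕ) : ℂ := ((XXD1 m : ℝ) : ℂ) + Complex.I * ((YYD1 m : ℝ) : ℂ)
def NumD1 (m : ℕ) : ℂ := (((AAD1 m : ℝ) : ℂ) - Complex.I * ((BBD1 m : ℝ) : ℂ)) * ((WWD1 m : ℝ) : ℂ)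

lemma lim_sin_div : Tendsto (fun x : ℝ => Real.sin x / x) (nhdsWithin 0 {(0:ℝ)}ᶜ) (nhds 1) := by
  have h := (hasDerivAt_iff_tendsto_slope).1 (Real.hasDerivAt_sin 0)
  rw [Real.cos_zero] at h
  refine h.congr (fun x => ?_)
  simp [slope_def_field, div_eq_div_iff]

lemma lim_tan_div : Tendsto (fun x : ℝ => Real.tan x / x) (nhdsWithin 0 {(0:ℝ)}ᶜ) (nhds 1) := by
  have h := (hasDerivAt_iff_tendsto_slope).1 (Real.hasDerivAt_tan (x := 0) (by simp))
  simp only [Real.cos_zero] at h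
  norm_num at h
  refine h.congr (fun x => ?_)
  simp [slope_def_field]

lemma lim_coth : Tendsto (fun x : ℝ => Real.cosh x / Real.sinh x) atTop (nhds 1) := by
  have key : ∀ᶠ x : ℝ in atTop, (1 + Real.exp (-(2*x))) / (1 - Real.exp (-(2*x)))
      = Real.cosh x / Real.sinh x := by
    filter_upwards [eventually_gt_atTop (0:ℝ)] with x hx
    have h1 : Real.sinh x ≠ 0 := ne_of_gt (Real.sinh_pos_iff.2 hx)
    have h2 : (1:ℝ) - Real.exp (-(2*x)) ≠ 0 := by
      have : Real.exp (-(2*x)) < 1 := Real.exp_lt_one_iff.2 (by linarith)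
      linarith
    have h1' : (Real.exp x - Real.exp (-x))/2 ≠ 0 := by rw [← Real.sinh_eq]; exact h1
    rw [Real.cosh_eq, Real.sinh_eq, div_eq_div_iff h2 h1']
    have h3 : Real.exp (-(2*x)) = Real.exp (-x) * Real.exp (-x) := by
      rw [← Real.exp_add]; ring_nf
    have hx2 : Real.exp x * Real.exp (-x) = 1 := by rw [← Real.exp_add]; simp
    rw [h3]
    linear_combination Real.exp (-x) * hx2
  refine Tendsto.congr' key ?_
  have he : Tendsto (fun x : ℝ => Real.exp (-(2*x))) atTop (nhds 0) := by
    apply Real.tendsto_exp_atBot.comp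
    have : Tendsto (fun x : ℝ => 2*x) atTop atTop := tendsto_id.const_mul_atTop two_pos
    exact tendsto_neg_atBot_iff.2 this
  have h1 : Tendsto (fun x : ℝ => 1 + Real.exp (-(2*x))) atTop (nhds 1) := by
    simpa using (tendsto_const_nhds (α := ℝ) (x := (1:ℝ))).add he
  have h2 : Tendsto (fun x : ℝ => 1 - Real.exp (-(2*x))) atTop (nhds 1) := by
    simpa using (tendsto_const_nhds (α := ℝ) (x := (1:ℝ))).sub he
  have := h1.div h2 one_ne_zero
  rw [div_one] at this
  exact this

lemma sinh_tendsto_atTop : Tendsto Real.sinh atTop atTop := by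
  refine tendsto_atTop_mono' atTop ?_ tendsto_id
  filter_upwards [eventually_gt_atTop (0:ℝ)] with x hx
  exact le_of_lt (Real.self_lt_sinh_iff.2 hx)

lemma kk_tendsto : Tendsto kkD1 atTop atTop :=
  tendsto_natCast_atTop_atTop.comp (tendsto_atTop_mono (fun m => by simp; omega) tendsto_id)

lemma kk_ev_pos : ∀ᶠ m in atTop, 0 < kkD1 m := by
  filter_upwards [eventually_ge_atTop 1] with m hm
  unfold kkD1
  have : (0:ℕ) < 2*m := by omega
  exact_mod_cast this

lemma kkpow_tendsto (p : ℕ) (hp : p ≠ 0) : Tendsto (fun m => (kkD1 m)^p) atTop atTop :=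
  (tendsto_pow_atTop hp).comp kk_tendsto

lemma invkpow_tendsto (p : ℕ) (hp : p ≠ 0) : Tendsto (fun m => 1/(kkD1 m)^p) atTop (nhds 0) := by
  simp only [one_div]
  exact (kkpow_tendsto p hp).inv_tendsto_atTop

lemma tt_tendsto : Tendsto ttD1 atTop (nhds 0) :=
  tendsto_const_nhds.div_atTop kk_tendsto

lemma uu_tendsto : Tendsto uuD1 atTop (nhds 0) :=
  tendsto_const_nhds.div_atTop (kkpow_tendsto 2 two_ne_zero)

lemma ss_tendsto : Tendsto ssD1 atTop atTop := by
  apply Filter.Tendsto.atTop_add_nonneg ((kkpow_tendsto 2 two_ne_zero).atTop_mul_const Real.pi_pos)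
  intro m
  unfold ttD1 kkD1
  positivity

lemma co_tendsto : Tendsto coD1 atTop (nhds 1) := lim_coth.comp ss_tendsto

lemma sin_tt_tendsto : Tendsto (fun m => Real.sin (ttD1 m)) atTop (nhds 0) := by
  have := (Real.continuous_sin.tendsto 0).comp tt_tendsto
  rw [Real.sin_zero] at this
  exact this

lemma cos_tt_tendsto : Tendsto (fun m => Real.cos (ttD1 m)) atTop (nhds 1) := by
  have := (Real.continuous_cos.tendsto 0).comp tt_tendsto
  rw [Real.cos_zero] at this
  exact this

lemma tan_uu_tendsto : Tendsto (fun m => Real.tan (uuD1 m)) atTop (nhds 0) := by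
  have hc : ContinuousAt Real.tan 0 := Real.continuousAt_tan.2 (by simp)
  have := hc.tendsto.comp uu_tendsto
  rw [Real.tan_zero] at this
  exact this

lemma tt_nhdsNe : Tendsto ttD1 atTop (nhdsWithin 0 {(0:ℝ)}ᶜ) := by
  apply tendsto_nhdsWithin_of_tendsto_nhds_of_eventually_within _ tt_tendsto
  filter_upwards [kk_ev_pos] with m hm
  have : 0 < ttD1 m := by unfold ttD1; positivity
  exact ne_of_gt this

lemma uu_nhdsNe : Tendsto uuD1 atTop (nhdsWithin 0 {(0:ℝ)}ᶜ) := by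
  apply tendsto_nhdsWithin_of_tendsto_nhds_of_eventually_within _ uu_tendsto
  filter_upwards [kk_ev_pos] with m hm
  have : 0 < uuD1 m := by unfold uuD1; positivity
  exact ne_of_gt this

lemma ksin_tendsto : Tendsto (fun m => kkD1 m * Real.sin (ttD1 m)) atTop (nhds π) := by
  have h1 : Tendsto (fun m => Real.sin (ttD1 m) / ttD1 m) atTop (nhds 1) :=
    lim_sin_div.comp tt_nhdsNe
  have h2 : Tendsto (fun m => π * (Real.sin (ttD1 m) / ttD1 m)) atTop (nhds π) := by
    simpa using h1.const_mul π
  refine Tendsto.congr' ?_ h2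
  filter_upwards [kk_ev_pos] with m hm
  have hk : kkD1 m ≠ 0 := ne_of_gt hm
  unfold ttD1
  field_simp

lemma k2tan_tendsto : Tendsto (fun m => (kkD1 m)^2 * Real.tan (uuD1 m)) atTop (nhds π) := by
  have h1 : Tendsto (fun m => Real.tan (uuD1 m) / uuD1 m) atTop (nhds 1) :=
    lim_tan_div.comp uu_nhdsNe
  have h2 : Tendsto (fun m => π * (Real.tan (uuD1 m) / uuD1 m)) atTop (nhds π) := by
    simpa using h1.const_mul π
  refine Tendsto.congr' ?_ h2
  filter_upwards [kk_ev_pos] with m hm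
  have hk : kkD1 m ≠ 0 := ne_of_gt hm
  unfold uuD1
  field_simp

lemma rr_tendsto : Tendsto rrD1 atTop atTop := by
  apply Filter.Tendsto.atTop_add_nonneg (kkpow_tendsto 2 two_ne_zero)
  intro m
  unfold kkD1
  positivity

lemma inv_rr_tendsto : Tendsto (fun m => 1/rrD1 m) atTop (nhds 0) := by
  simp only [one_div]
  exact rr_tendsto.inv_tendsto_atTop

lemma inv_sinh_tendsto : Tendsto (fun m => 1/Real.sinh (ssD1 m)) atTop (nhds 0) := by
  simp only [one_div]
  exact (sinh_tendsto_atTop.comp ss_tendsto).inv_tendsto_atTop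

lemma r6_tendsto : Tendsto (fun m => 1 + 1/(kkD1 m)^3) atTop (nhds 1) := by
  simpa using (tendsto_const_nhds (α := ℕ) (x := (1:ℝ))).add (invkpow_tendsto 3 three_ne_zero)

lemma bb4_tendsto : Tendsto (fun m => bbD1 m / (kkD1 m)^4) atTop (nhds 1) := by
  have h : Tendsto (fun m => 1 + 2*(1/(kkD1 m)^3) + 1/(kkD1 m)^6) atTop (nhds 1) := by
    have := ((tendsto_const_nhds (α := ℕ) (x := (1:ℝ))).add
      ((invkpow_tendsto 3 three_ne_zero).const_mul 2)).add (invkpow_tendsto 6 (by norm_num))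
    simpa using this
  refine Tendsto.congr' ?_ h
  filter_upwards [kk_ev_pos] with m hm
  have hk : kkD1 m ≠ 0 := ne_of_gt hm
  unfold bbD1
  field_simp

lemma XX_tendsto : Tendsto XXD1 atTop (nhds 1) := by
  have h : Tendsto XXD1 atTop (nhds ((1:ℝ) * (1*0 + 1) - 2*1*π*0)) := by
    unfold XXD1
    exact (r6_tendsto.mul ((co_tendsto.mul sin_tt_tendsto).add cos_tt_tendsto)).sub
      ((((bb4_tendsto.const_mul 2).mul k2tan_tendsto).mul sin_tt_tendsto))
  simpa using h

lemma YY_tendsto : Tendsto YYD1 atTop (nhds 0) := by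
  have h : Tendsto YYD1 atTop (nhds ((0:ℝ)*0 - 1*1*0 + 1*0*(1*0+1))) := by
    unfold YYD1
    exact (((invkpow_tendsto 2 two_ne_zero).mul inv_sinh_tendsto).sub
      ((co_tendsto.mul cos_tt_tendsto).mul (invkpow_tendsto 2 two_ne_zero))).add
      ((r6_tendsto.mul tan_uu_tendsto).mul ((co_tendsto.mul sin_tt_tendsto).add cos_tt_tendsto))
  simpa using h

lemma AA_tendsto : Tendsto AAD1 atTop (nhds (2*π)) := by
  have h : Tendsto AAD1 atTop (nhds ((2*1)*π)) := by
    unfold AAD1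
    exact (r6_tendsto.const_mul 2).mul ksin_tendsto
  simpa using h

lemma BB_tendsto : Tendsto BBD1 atTop (nhds 0) := by
  have h : Tendsto BBD1 atTop (nhds ((1*0+1)*0)) := by
    unfold BBD1
    exact ((co_tendsto.mul sin_tt_tendsto).add cos_tt_tendsto).mul (by simpa using invkpow_tendsto 1 one_ne_zero)
  simpa using h

lemma WW_tendsto : Tendsto WWD1 atTop (nhds (1/(2*π))) := by
  have h : Tendsto WWD1 atTop (nhds ((1:ℝ)/(2*π) - 0*(0*0)/(2*π^2))) := by
    unfold WWD1
    exact (r6_tendsto.div_const (2*π)).sub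
      ((tan_uu_tendsto.mul ((invkpow_tendsto 2 two_ne_zero).mul inv_rr_tendsto)).div_const (2*π^2))
  simpa using h

lemma Den_tendsto : Tendsto DenD1 atTop (nhds 1) := by
  have hX := (Complex.continuous_ofReal.tendsto 1).comp XX_tendsto
  have hY := (Complex.continuous_ofReal.tendsto 0).comp YY_tendsto
  have h : Tendsto DenD1 atTop (nhds (((1:ℝ):ℂ) + Complex.I * ((0:ℝ):ℂ))) := by
    unfold DenD1
    exact hX.add (tendsto_const_nhds.mul hY)
  simpa using h

lemma Num_tendsto : Tendsto NumD1 atTop (nhds 1) := by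
  have hA := (Complex.continuous_ofReal.tendsto (2*π)).comp AA_tendsto
  have hB := (Complex.continuous_ofReal.tendsto 0).comp BB_tendsto
  have hW := (Complex.continuous_ofReal.tendsto (1/(2*π))).comp WW_tendsto
  have h : Tendsto NumD1 atTop
      (nhds ((((2*π:ℝ):ℂ) - Complex.I * ((0:ℝ):ℂ)) * (((1/(2*π):ℝ)):ℂ))) := by
    unfold NumD1
    exact (hA.sub (tendsto_const_nhds.mul hB)).mul hW
  have hval : (((2*π:ℝ):ℂ) - Complex.I * ((0:ℝ):ℂ)) * (((1/(2*π):ℝ)):ℂ) = 1 := by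
    push_cast
    have : (π:ℂ) ≠ 0 := by exact_mod_cast Real.pi_ne_zero
    field_simp
    simp
  rwa [hval] at h

end AuxD1

/-- The transmission relation forces 2·βₙ^{3/2}·d₁ ~ π²·√n along
βₙ = n² + 2√n + 1/n, n = (2m)² an even perfect square:  hence the resolvent
sequence is unbounded and the string–beam system is not exponentially stable. -/
theorem d1_asymptotic_equivalence
    (n : ℕ → ℝ) (hn : ∀ m, n m = ((2 * m : ℕ) : ℝ)^2)
    (β : ℕ → ℝ) (hβ : ∀ m, β m = (n m)^2 + 2 * Real.sqrt (n m) + 1 / n m)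
    (h : ℝ → ℝ) (hh : ∀ x, h x = Real.cosh x * Real.sin x + Real.sinh x * Real.cos x)
    (d : ℕ → ℂ)
    (hrel : ∀ m,
      2 * d m *
        (((Real.sqrt (β m) * h (Real.sqrt (β m) * π)
            - 2 * β m * Real.tan (β m * π) * Real.sin (Real.sqrt (β m) * π)
              * Real.sinh (Real.sqrt (β m) * π) : ℝ) : ℂ)
          + Complex.I *
            ((1 - Real.cosh (Real.sqrt (β m) * π) * Real.cos (Real.sqrt (β m) * π)
              + Real.sqrt (β m) * Real.tan (β m * π) * h (Real.sqrt (β m) * π) : ℝ) : ℂ))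
      = (((2 * Real.sqrt (β m) * Real.sin (Real.sqrt (β m) * π)
            * Real.sinh (Real.sqrt (β m) * π) : ℝ) : ℂ)
          - Complex.I * ((h (Real.sqrt (β m) * π) : ℝ) : ℂ))
        * ((-Real.tan (β m * π) / (2 * (β m)^2) + π / (2 * β m) : ℝ) : ℂ)) :
    Tendsto
      (fun m => ((2 * β m ^ ((3:ℝ)/2) : ℝ) : ℂ) * d m / ((π^2 * Real.sqrt (n m) : ℝ) : ℂ))
      atTop (nhds 1) := by
  have hDen_ne : ∀ᶠ m in atTop, DenD1 m ≠ 0 := Den_tendsto.eventually_ne one_ne_zero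
  have key : ∀ᶠ m in atTop,
      ((2 * β m ^ ((3:ℝ)/2) : ℝ) : ℂ) * d m / ((π^2 * Real.sqrt (n m) : ℝ) : ℂ)
        = NumD1 m / DenD1 m := by
    filter_upwards [eventually_ge_atTop 1, hDen_ne, kk_ev_pos] with m hm hne hk0
    have hk : kkD1 m ≠ 0 := ne_of_gt hk0
    have hsn : Real.sqrt (n m) = kkD1 m := by
      rw [hn m]; exact Real.sqrt_sq (Nat.cast_nonneg _)
    have hb : β m = bbD1 m := by
      rw [hβ m, hsn, hn m]
      unfold bbD1 kkD1
      ring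
    have hbpos : 0 < β m := by
      rw [hb]; unfold bbD1
      positivity
    have hbne : β m ≠ 0 := ne_of_gt hbpos
    have hrpos : 0 < rrD1 m := by unfold rrD1; positivity
    have hrne : rrD1 m ≠ 0 := ne_of_gt hrpos
    have hsqb : Real.sqrt (β m) = rrD1 m := by
      rw [hb, show bbD1 m = (rrD1 m)^2 by unfold bbD1 rrD1; field_simp; ring]
      exact Real.sqrt_sq (le_of_lt hrpos)
    have hsπ : Real.sqrt (β m) * π = ssD1 m := by
      rw [hsqb]; unfold rrD1 ssD1 ttD1; ring
    have hsin : Real.sin (ssD1 m) = Real.sin (ttD1 m) := by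
      rw [show ssD1 m = ttD1 m + ((2*m^2 : ℤ) : ℝ) * (2*π) by unfold ssD1 kkD1; push_cast; ring,
        Real.sin_add_int_mul_two_pi]
    have hcos : Real.cos (ssD1 m) = Real.cos (ttD1 m) := by
      rw [show ssD1 m = ttD1 m + ((2*m^2 : ℤ) : ℝ) * (2*π) by unfold ssD1 kkD1; push_cast; ring,
        Real.cos_add_int_mul_two_pi]
    have htn : Real.tan (β m * π) = Real.tan (uuD1 m) := by
      rw [show β m * π = uuD1 m + ((16*m^4 + 4*m : ℕ) : ℝ) * π by
        rw [hb]; unfold bbD1 uuD1 kkD1; push_cast; field_simp; ring]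
      exact Real.tan_periodic.nat_mul (16*m^4 + 4*m) (uuD1 m)
    have hβ32 : β m ^ ((3:ℝ)/2) = β m * rrD1 m := by
      rw [show ((3:ℝ)/2) = 1 + 1/2 by norm_num, Real.rpow_add hbpos, Real.rpow_one,
        ← Real.sqrt_eq_rpow, hsqb]
    have hSHpos : 0 < Real.sinh (ssD1 m) := by
      apply Real.sinh_pos_iff.2
      unfold ssD1 ttD1
      positivity
    have hSH : Real.sinh (ssD1 m) ≠ 0 := ne_of_gt hSHpos
    -- complex-level nonzero facts
    have hkC : (kkD1 m : ℂ) ≠ 0 := by exact_mod_cast hk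
    have hSHC : (Real.sinh (ssD1 m) : ℂ) ≠ 0 := by exact_mod_cast hSH
    have hπC : (π : ℂ) ≠ 0 := by exact_mod_cast Real.pi_ne_zero
    have hbC : ((bbD1 m : ℝ) : ℂ) ≠ 0 := by rw [← hb]; exact_mod_cast hbne
    have hrC : ((rrD1 m : ℝ) : ℂ) ≠ 0 := by exact_mod_cast hrne
    -- rewrite the transmission relation
    have hr := hrel m
    rw [hsπ, hh, hsin, hcos, htn, hsqb, hb] at hr
    -- factorization of the denominator term
    have hπR : (π:ℝ) ≠ 0 := Real.pi_ne_zero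
    have hbbne : bbD1 m ≠ 0 := hb ▸ hbne
    have hRe : XXD1 m * ((kkD1 m)^2 * Real.sinh (ssD1 m))
        = rrD1 m * (Real.cosh (ssD1 m) * Real.sin (ttD1 m)
            + Real.sinh (ssD1 m) * Real.cos (ttD1 m))
          - 2 * bbD1 m * Real.tan (uuD1 m) * Real.sin (ttD1 m) * Real.sinh (ssD1 m) := by
      unfold XXD1 coD1 rrD1
      field_simp
    have hIm : YYD1 m * ((kkD1 m)^2 * Real.sinh (ssD1 m))
        = 1 - Real.cosh (ssD1 m) * Real.cos (ttD1 m)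
          + rrD1 m * Real.tan (uuD1 m) * (Real.cosh (ssD1 m) * Real.sin (ttD1 m)
            + Real.sinh (ssD1 m) * Real.cos (ttD1 m)) := by
      unfold YYD1 coD1 rrD1
      field_simp
    have hFac : DenD1 m * (((kkD1 m)^2 * Real.sinh (ssD1 m) : ℝ) : ℂ)
        = (((rrD1 m * (Real.cosh (ssD1 m) * Real.sin (ttD1 m)
              + Real.sinh (ssD1 m) * Real.cos (ttD1 m))
            - 2 * bbD1 m * Real.tan (uuD1 m) * Real.sin (ttD1 m)
              * Real.sinh (ssD1 m) : ℝ) : ℂ)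
          + Complex.I *
            ((1 - Real.cosh (ssD1 m) * Real.cos (ttD1 m)
              + rrD1 m * Real.tan (uuD1 m) * (Real.cosh (ssD1 m) * Real.sin (ttD1 m)
              + Real.sinh (ssD1 m) * Real.cos (ttD1 m)) : ℝ) : ℂ)) := by
      rw [← hRe, ← hIm]
      unfold DenD1
      push_cast
      ring
    have hN1 : AAD1 m * WWD1 m * (π^2 * (kkD1 m)^3 * Real.sinh (ssD1 m))
        = bbD1 m * rrD1 m * (2 * rrD1 m * Real.sin (ttD1 m) * Real.sinh (ssD1 m))
            * (-Real.tan (uuD1 m) / (2 * (bbD1 m)^2) + π / (2 * bbD1 m)) := by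
      unfold AAD1 WWD1 rrD1 bbD1
      field_simp
      ring
    have hN2 : BBD1 m * WWD1 m * (π^2 * (kkD1 m)^3 * Real.sinh (ssD1 m))
        = bbD1 m * rrD1 m * (Real.cosh (ssD1 m) * Real.sin (ttD1 m)
            + Real.sinh (ssD1 m) * Real.cos (ttD1 m))
            * (-Real.tan (uuD1 m) / (2 * (bbD1 m)^2) + π / (2 * bbD1 m)) := by
      unfold BBD1 WWD1 coD1 rrD1 bbD1
      field_simp
      ring
    have hNumEq : NumD1 m * ((π^2 * (kkD1 m)^3 * Real.sinh (ssD1 m) : ℝ) : ℂ)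
        = ((bbD1 m * rrD1 m : ℝ) : ℂ) *
          ((((2 * rrD1 m * Real.sin (ttD1 m) * Real.sinh (ssD1 m) : ℝ) : ℂ)
            - Complex.I * ((Real.cosh (ssD1 m) * Real.sin (ttD1 m)
              + Real.sinh (ssD1 m) * Real.cos (ttD1 m) : ℝ) : ℂ))
          * ((-Real.tan (uuD1 m) / (2 * (bbD1 m)^2) + π / (2 * bbD1 m) : ℝ) : ℂ)) := by
      calc NumD1 m * ((π^2 * (kkD1 m)^3 * Real.sinh (ssD1 m) : ℝ) : ℂ)
          = ((AAD1 m * WWD1 m * (π^2 * (kkD1 m)^3 * Real.sinh (ssD1 m)) : ℝ) : ℂ)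
            - Complex.I * ((BBD1 m * WWD1 m * (π^2 * (kkD1 m)^3 * Real.sinh (ssD1 m)) : ℝ) : ℂ) := by
            unfold NumD1; push_cast; ring
        _ = ((bbD1 m * rrD1 m * (2 * rrD1 m * Real.sin (ttD1 m) * Real.sinh (ssD1 m))
              * (-Real.tan (uuD1 m) / (2 * (bbD1 m)^2) + π / (2 * bbD1 m)) : ℝ) : ℂ)
            - Complex.I * ((bbD1 m * rrD1 m * (Real.cosh (ssD1 m) * Real.sin (ttD1 m)
              + Real.sinh (ssD1 m) * Real.cos (ttD1 m))
              * (-Real.tan (uuD1 m) / (2 * (bbD1 m)^2) + π / (2 * bbD1 m)) : ℝ) : ℂ) := by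
            rw [hN1, hN2]
        _ = _ := by push_cast; ring
    -- put the goal in cross-multiplied form
    rw [hβ32, hsn, hb]
    have hπkC : ((π^2 * kkD1 m : ℝ) : ℂ) ≠ 0 :=
      Complex.ofReal_ne_zero.2 (mul_ne_zero (pow_ne_zero 2 hπR) hk)
    rw [div_eq_div_iff hπkC hne]
    have hkshC : (((kkD1 m)^2 * Real.sinh (ssD1 m) : ℝ) : ℂ) ≠ 0 :=
      Complex.ofReal_ne_zero.2 (mul_ne_zero (pow_ne_zero 2 hk) hSH)
    apply mul_right_cancel₀ hkshC
    push_cast at hr hFac hNumEq ⊢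
    linear_combination ((bbD1 m : ℂ) * (rrD1 m : ℂ)) * hr
      + (2 * (bbD1 m : ℂ) * (rrD1 m : ℂ) * d m) * hFac - hNumEq
  have hlim : Tendsto (fun m => NumD1 m / DenD1 m) atTop (nhds 1) := by
    have := Num_tendsto.div Den_tendsto one_ne_zero
    rw [div_one] at this
    exact this
  exact Tendsto.congr' (key.mono fun m hm => hm.symm) hlim
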